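/- A(π) = 0, where A(y) = Σ_{n=1}^∞ n² e^{−n²y}(−4n⁴y² + 15n²y − 15/2). -/

import Mathlib

open Real

noncomputable def uu (n : ℤ) (t : ℝ) : ℝ := π * (n : ℝ) ^ 2 * Real.exp t

noncomputable def g0 (n : ℤ) (t : ℝ) : ℝ := Real.exp (t / 4 - uu n t)

noncomputable def g1 (n : ℤ) (t : ℝ) : ℝ := (1 / 4 - uu n t) * g0 n t

noncomputable def g2 (n : ℤ) (t : ℝ) : ℝ := ((1 / 4 - uu n t) ^ 2 - uu n t) * g0 n t

noncomputable def g3 (n : ℤ) (t : ℝ) : ℝ :=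
  ((1 / 4 - uu n t) ^ 3 + 3 * (uu n t) ^ 2 - 7 / 4 * uu n t) * g0 n t

lemma hasDerivAt_uu (n : ℤ) (t : ℝ) : HasDerivAt (uu n) (uu n t) t := by
  unfold uu; exact (Real.hasDerivAt_exp t).const_mul (π * (n : ℝ) ^ 2)

lemma hasDerivAt_g0 (n : ℤ) (t : ℝ) : HasDerivAt (g0 n) (g1 n t) t := by
  have h1 : HasDerivAt (fun t => t / 4 - uu n t) (1 / 4 - uu n t) t :=
    ((hasDerivAt_id t).div_const 4).sub (hasDerivAt_uu n t)
  have h2 := h1.exp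
  have : HasDerivAt (fun t => Real.exp (t / 4 - uu n t))
      ((1 / 4 - uu n t) * Real.exp (t / 4 - uu n t)) t := by
    convert h2 using 1; ring
  exact this

lemma hasDerivAt_g1 (n : ℤ) (t : ℝ) : HasDerivAt (g1 n) (g2 n t) t := by
  have h1 : HasDerivAt (fun t => 1 / 4 - uu n t) (-(uu n t)) t :=
    (hasDerivAt_uu n t).const_sub (1 / 4)
  have h2 := h1.mul (hasDerivAt_g0 n t)
  have : HasDerivAt (fun t => (1 / 4 - uu n t) * g0 n t) (g2 n t) t := by
    refine h2.congr_deriv ?_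
    simp only [g2, g1]
    ring
  exact this

lemma hasDerivAt_g2 (n : ℤ) (t : ℝ) : HasDerivAt (g2 n) (g3 n t) t := by
  have h1 : HasDerivAt (fun t => 1 / 4 - uu n t) (-(uu n t)) t :=
    (hasDerivAt_uu n t).const_sub (1 / 4)
  have hsq : HasDerivAt (fun t => (1 / 4 - uu n t) ^ 2)
      (2 * (1 / 4 - uu n t) ^ 1 * -(uu n t)) t := h1.pow 2
  have h2 : HasDerivAt (fun t => (1 / 4 - uu n t) ^ 2 - uu n t)
      (2 * (1 / 4 - uu n t) ^ 1 * -(uu n t) - uu n t) t := hsq.sub (hasDerivAt_uu n t)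
  have h3 := h2.mul (hasDerivAt_g0 n t)
  have : HasDerivAt (fun t => ((1 / 4 - uu n t) ^ 2 - uu n t) * g0 n t) (g3 n t) t := by
    refine h3.congr_deriv ?_
    simp only [g3, g1]
    ring
  exact this

noncomputable def U0 (n : ℤ) : ℝ := 2 * Real.exp (-(n : ℝ) ^ 2)
noncomputable def U1 (n : ℤ) : ℝ := (2 + 18 * (n : ℝ) ^ 2) * Real.exp (-(n : ℝ) ^ 2)
noncomputable def U2 (n : ℤ) : ℝ :=
  (2 + 54 * (n : ℝ) ^ 2 + 162 * ((n : ℝ) ^ 2) ^ 2) * Real.exp (-(n : ℝ) ^ 2)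
noncomputable def U3 (n : ℤ) : ℝ :=
  (2 + 90 * (n : ℝ) ^ 2 + 972 * ((n : ℝ) ^ 2) ^ 2 + 1458 * ((n : ℝ) ^ 2) ^ 3) *
    Real.exp (-(n : ℝ) ^ 2)

lemma sumaux (k : ℕ) : Summable (fun n : ℤ => ((n : ℝ) ^ 2) ^ k * Real.exp (-(n : ℝ) ^ 2)) := by
  have key : Summable (fun n : ℕ => ((n : ℝ) ^ 2) ^ k * Real.exp (-(n : ℝ) ^ 2)) := by
    have hgeom : Summable (fun n : ℕ => (n : ℝ) ^ (2 * k) * Real.exp (-1) ^ n) := by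
      apply summable_pow_mul_geometric_of_norm_lt_one
      rw [Real.norm_eq_abs, abs_of_pos (Real.exp_pos _)]
      exact Real.exp_lt_one_iff.mpr (by norm_num)
    apply Summable.of_nonneg_of_le (fun n => by positivity) _ hgeom
    intro n
    have h1 : ((n : ℝ) ^ 2) ^ k = (n : ℝ) ^ (2 * k) := by rw [← pow_mul]
    have h2 : Real.exp (-(n : ℝ) ^ 2) ≤ Real.exp (-1) ^ n := by
      rw [← Real.exp_nat_mul]
      apply Real.exp_le_exp.mpr
      have : (n : ℝ) ≤ (n : ℝ) ^ 2 := by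
        rcases Nat.eq_zero_or_pos n with h0 | h0
        · simp [h0]
        · have : (1 : ℝ) ≤ (n : ℝ) := by exact_mod_cast h0
          nlinarith
      linarith
    calc ((n : ℝ) ^ 2) ^ k * Real.exp (-(n : ℝ) ^ 2)
        ≤ ((n : ℝ) ^ 2) ^ k * Real.exp (-1) ^ n := by
          apply mul_le_mul_of_nonneg_left h2 (by positivity)
      _ = (n : ℝ) ^ (2 * k) * Real.exp (-1) ^ n := by rw [h1]
  apply Summable.of_nat_of_neg
  · exact key.congr (fun n => by push_cast; ring_nf)
  · apply key.congr
    intro n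
    have : ((-(n : ℤ) : ℤ) : ℝ) ^ 2 = ((n : ℕ) : ℝ) ^ 2 := by push_cast; ring
    rw [this]

lemma sumU0 : Summable U0 := ((sumaux 0).mul_left 2).congr (fun n => by simp [U0])

lemma sumU1 : Summable U1 :=
  (((sumaux 0).mul_left 2).add ((sumaux 1).mul_left 18)).congr (fun n => by simp [U1]; ring)

lemma sumU2 : Summable U2 :=
  ((((sumaux 0).mul_left 2).add ((sumaux 1).mul_left 54)).add
    ((sumaux 2).mul_left 162)).congr (fun n => by simp [U2]; ring)

lemma sumU3 : Summable U3 :=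
  (((((sumaux 0).mul_left 2).add ((sumaux 1).mul_left 90)).add
    ((sumaux 2).mul_left 972)).add ((sumaux 3).mul_left 1458)).congr
      (fun n => by simp [U3]; ring)

section bounds

variable {n : ℤ} {y : ℝ}

lemma uu_nonneg (n : ℤ) (y : ℝ) : 0 ≤ uu n y := by
  unfold uu; positivity

lemma uu_le (hy : y ∈ Set.Ioo (-1 : ℝ) 1) : uu n y ≤ 9 * (n : ℝ) ^ 2 := by
  have h1 : Real.exp y ≤ Real.exp 1 := Real.exp_le_exp.mpr hy.2.le
  have h2 : π * Real.exp y ≤ 9 := by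
    nlinarith [Real.exp_one_lt_d9, Real.pi_lt_d2, Real.exp_pos y, Real.pi_pos]
  have hx : (0 : ℝ) ≤ (n : ℝ) ^ 2 := sq_nonneg _
  unfold uu
  nlinarith [h2, hx, Real.exp_pos y]

lemma le_uu (hy : y ∈ Set.Ioo (-1 : ℝ) 1) : (n : ℝ) ^ 2 ≤ uu n y := by
  have h4 : Real.exp (-1) ≤ Real.exp y := Real.exp_le_exp.mpr hy.1.le
  have h5 : Real.exp 1 * Real.exp (-1) = 1 := by rw [← Real.exp_add]; norm_num
  have h6 : Real.exp 1 < π := by nlinarith [Real.exp_one_lt_d9, Real.pi_gt_d6]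
  have h7 : 1 < π * Real.exp (-1) := by nlinarith [Real.exp_pos (-1)]
  have h3 : (1 : ℝ) ≤ π * Real.exp y := by nlinarith [Real.pi_pos]
  have hx : (0 : ℝ) ≤ (n : ℝ) ^ 2 := sq_nonneg _
  unfold uu
  nlinarith [hx, h3]

lemma g0_pos (n : ℤ) (y : ℝ) : 0 < g0 n y := Real.exp_pos _

lemma g0_le (hy : y ∈ Set.Ioo (-1 : ℝ) 1) : g0 n y ≤ 2 * Real.exp (-(n : ℝ) ^ 2) := by
  have h1 : y / 4 - uu n y ≤ 1 / 4 + -(n : ℝ) ^ 2 := by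
    have := le_uu (n := n) hy
    have := hy.2
    linarith
  have h24 : Real.exp (1 / 4 : ℝ) ≤ 2 := by
    rw [show (2 : ℝ) = Real.exp (Real.log 2) from (Real.exp_log two_pos).symm]
    exact Real.exp_le_exp.mpr (by linarith [Real.log_two_gt_d9])
  calc g0 n y ≤ Real.exp (1 / 4 + -(n : ℝ) ^ 2) := Real.exp_le_exp.mpr h1
    _ = Real.exp (1 / 4 : ℝ) * Real.exp (-(n : ℝ) ^ 2) := Real.exp_add _ _
    _ ≤ 2 * Real.exp (-(n : ℝ) ^ 2) :=
        mul_le_mul_of_nonneg_right h24 (Real.exp_pos _).le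

lemma bound1 (n : ℤ) (y : ℝ) (hy : y ∈ Set.Ioo (-1 : ℝ) 1) : ‖g1 n y‖ ≤ U1 n := by
  have hu0 := uu_nonneg n y
  have hu9 := uu_le (n := n) hy
  have hg := g0_le (n := n) hy
  have hgp := g0_pos n y
  have hx : (0 : ℝ) ≤ (n : ℝ) ^ 2 := sq_nonneg _
  have habs : |1 / 4 - uu n y| ≤ 1 + 9 * (n : ℝ) ^ 2 := by
    rw [abs_le]; constructor <;> nlinarith
  rw [g1, Real.norm_eq_abs, abs_mul, abs_of_pos hgp]
  calc |1 / 4 - uu n y| * g0 n y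
      ≤ (1 + 9 * (n : ℝ) ^ 2) * (2 * Real.exp (-(n : ℝ) ^ 2)) :=
        mul_le_mul habs hg hgp.le (by positivity)
    _ = U1 n := by rw [U1]; ring

lemma bound2 (n : ℤ) (y : ℝ) (hy : y ∈ Set.Ioo (-1 : ℝ) 1) : ‖g2 n y‖ ≤ U2 n := by
  have hu0 := uu_nonneg n y
  have hu9 := uu_le (n := n) hy
  have hg := g0_le (n := n) hy
  have hgp := g0_pos n y
  have hx : (0 : ℝ) ≤ (n : ℝ) ^ 2 := sq_nonneg _
  have habs : |(1 / 4 - uu n y) ^ 2 - uu n y| ≤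
      1 + 27 * (n : ℝ) ^ 2 + 81 * ((n : ℝ) ^ 2) ^ 2 := by
    have hu2 : (uu n y) ^ 2 ≤ 81 * ((n : ℝ) ^ 2) ^ 2 := by nlinarith
    rw [abs_le]; constructor <;> nlinarith
  rw [g2, Real.norm_eq_abs, abs_mul, abs_of_pos hgp]
  calc |(1 / 4 - uu n y) ^ 2 - uu n y| * g0 n y
      ≤ (1 + 27 * (n : ℝ) ^ 2 + 81 * ((n : ℝ) ^ 2) ^ 2) * (2 * Real.exp (-(n : ℝ) ^ 2)) :=
        mul_le_mul habs hg hgp.le (by positivity)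
    _ = U2 n := by rw [U2]; ring

lemma bound3 (n : ℤ) (y : ℝ) (hy : y ∈ Set.Ioo (-1 : ℝ) 1) : ‖g3 n y‖ ≤ U3 n := by
  have hu0 := uu_nonneg n y
  have hu9 := uu_le (n := n) hy
  have hg := g0_le (n := n) hy
  have hgp := g0_pos n y
  have hx : (0 : ℝ) ≤ (n : ℝ) ^ 2 := sq_nonneg _
  have hu2 : (uu n y) ^ 2 ≤ 81 * ((n : ℝ) ^ 2) ^ 2 := by nlinarith
  have hu3 : (uu n y) ^ 3 ≤ 729 * ((n : ℝ) ^ 2) ^ 3 := by nlinarith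
  have habs : |(1 / 4 - uu n y) ^ 3 + 3 * (uu n y) ^ 2 - 7 / 4 * uu n y| ≤
      1 + 45 * (n : ℝ) ^ 2 + 486 * ((n : ℝ) ^ 2) ^ 2 + 729 * ((n : ℝ) ^ 2) ^ 3 := by
    have h1 : |(1 / 4 - uu n y) ^ 3 + 3 * (uu n y) ^ 2 - 7 / 4 * uu n y| ≤
        1 + 5 * uu n y + 6 * (uu n y) ^ 2 + (uu n y) ^ 3 := by
      rw [abs_le]; constructor <;> nlinarith [pow_nonneg hu0 3, sq_nonneg (uu n y)]
    have h2 : 1 + 5 * uu n y + 6 * (uu n y) ^ 2 + (uu n y) ^ 3 ≤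
        1 + 45 * (n : ℝ) ^ 2 + 486 * ((n : ℝ) ^ 2) ^ 2 + 729 * ((n : ℝ) ^ 2) ^ 3 := by
      nlinarith
    linarith
  rw [g3, Real.norm_eq_abs, abs_mul, abs_of_pos hgp]
  calc |(1 / 4 - uu n y) ^ 3 + 3 * (uu n y) ^ 2 - 7 / 4 * uu n y| * g0 n y
      ≤ (1 + 45 * (n : ℝ) ^ 2 + 486 * ((n : ℝ) ^ 2) ^ 2 + 729 * ((n : ℝ) ^ 2) ^ 3) *
        (2 * Real.exp (-(n : ℝ) ^ 2)) := mul_le_mul habs hg hgp.le (by positivity)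
    _ = U3 n := by rw [U3]; ring

end bounds

lemma h0mem : (0 : ℝ) ∈ Set.Ioo (-1 : ℝ) 1 := by norm_num

lemma sumg0 : Summable (fun n : ℤ => g0 n 0) := by
  apply Summable.of_norm_bounded sumU0
  intro n
  rw [Real.norm_eq_abs, abs_of_pos (g0_pos n 0)]
  exact g0_le h0mem

lemma sumg1 : Summable (fun n : ℤ => g1 n 0) :=
  Summable.of_norm_bounded sumU1 (fun n => bound1 n 0 h0mem)

lemma sumg2 : Summable (fun n : ℤ => g2 n 0) :=
  Summable.of_norm_bounded sumU2 (fun n => bound2 n 0 h0mem)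

lemma sumg3 : Summable (fun n : ℤ => g3 n 0) :=
  Summable.of_norm_bounded sumU3 (fun n => bound3 n 0 h0mem)

lemma Feven (t : ℝ) : (∑' n : ℤ, g0 n t) = ∑' n : ℤ, g0 n (-t) := by
  have expand : ∀ s : ℝ, (∑' n : ℤ, g0 n s) =
      Real.exp (s / 4) * ∑' n : ℤ, Real.exp (-π * Real.exp s * (n : ℝ) ^ 2) := by
    intro s
    rw [← tsum_mul_left]
    apply tsum_congr
    intro n
    rw [g0, ← Real.exp_add]
    congr 1
    simp only [uu]
    ring
  rw [expand t, expand (-t)]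
  rw [Real.tsum_exp_neg_mul_int_sq (Real.exp_pos t)]
  have hinner : (∑' n : ℤ, Real.exp (-π / Real.exp t * (n : ℝ) ^ 2)) =
      ∑' n : ℤ, Real.exp (-π * Real.exp (-t) * (n : ℝ) ^ 2) := by
    apply tsum_congr
    intro n
    congr 1
    rw [Real.exp_neg]
    ring
  rw [hinner]
  have hpow : (Real.exp t) ^ ((1 : ℝ) / 2) = Real.exp (t / 2) := by
    rw [Real.rpow_def_of_pos (Real.exp_pos t), Real.log_exp]
    ring_nf
  rw [hpow]
  rw [← mul_assoc]
  congr 1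
  rw [one_div, ← Real.exp_neg, ← Real.exp_add]
  congr 1
  ring

theorem A_pi_eq_zero :
    (∑' n : ℕ+, (n : ℝ) ^ 2 * Real.exp (-((n : ℝ) ^ 2 * π))
      * (-4 * (n : ℝ) ^ 4 * π ^ 2 + 15 * (n : ℝ) ^ 2 * π - 15 / 2)) = 0 := by
  set s : Set ℝ := Set.Ioo (-1 : ℝ) 1 with hs_def
  have hs : IsOpen s := isOpen_Ioo
  have hsc : IsPreconnected s := (convex_Ioo (-1 : ℝ) 1).isPreconnected
  have hF1 : ∀ y ∈ s, HasDerivAt (fun z => ∑' n : ℤ, g0 n z) (∑' n : ℤ, g1 n y) y :=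
    fun y hy => hasDerivAt_tsum_of_isPreconnected sumU1 hs hsc
      (fun n y _ => hasDerivAt_g0 n y) bound1 h0mem sumg0 hy
  have hF2 : ∀ y ∈ s, HasDerivAt (fun z => ∑' n : ℤ, g1 n z) (∑' n : ℤ, g2 n y) y :=
    fun y hy => hasDerivAt_tsum_of_isPreconnected sumU2 hs hsc
      (fun n y _ => hasDerivAt_g1 n y) bound2 h0mem sumg1 hy
  have hF3 : ∀ y ∈ s, HasDerivAt (fun z => ∑' n : ℤ, g2 n z) (∑' n : ℤ, g3 n y) y :=
    fun y hy => hasDerivAt_tsum_of_isPreconnected sumU3 hs hsc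
      (fun n y _ => hasDerivAt_g2 n y) bound3 h0mem sumg2 hy
  have hnegmem : ∀ y : ℝ, y ∈ s → -y ∈ s := by
    intro y hy
    obtain ⟨h1, h2⟩ := hy
    exact ⟨by linarith, by linarith⟩
  -- first derivative is odd
  have hodd1 : ∀ y ∈ s, (∑' n : ℤ, g1 n y) = -(∑' n : ℤ, g1 n (-y)) := by
    intro y hy
    have hy' := hnegmem y hy
    have hneg : HasDerivAt (fun z : ℝ => -z) (-1) y := (hasDerivAt_id y).neg
    have h4 := (hF1 (-y) hy').comp y hneg
    have heq : ((fun z => ∑' n : ℤ, g0 n z) ∘ fun z : ℝ => -z) =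
        (fun z => ∑' n : ℤ, g0 n z) := funext fun z => (Feven z).symm
    rw [heq] at h4
    have := (hF1 y hy).unique h4
    rw [this]; ring
  -- second derivative is even (on s)
  have heven2 : ∀ y ∈ s, (∑' n : ℤ, g2 n y) = (∑' n : ℤ, g2 n (-y)) := by
    intro y hy
    have hy' := hnegmem y hy
    have hneg : HasDerivAt (fun z : ℝ => -z) (-1) y := (hasDerivAt_id y).neg
    have h4 : HasDerivAt (fun z : ℝ => -(∑' n : ℤ, g1 n (-z))) (∑' n : ℤ, g2 n (-y)) y := by
      have h5 := ((hF2 (-y) hy').comp y hneg).neg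
      refine h5.congr_deriv ?_
      ring
    have hev : (fun z => ∑' n : ℤ, g1 n z) =ᶠ[nhds y]
        (fun z : ℝ => -(∑' n : ℤ, g1 n (-z))) := by
      filter_upwards [hs.mem_nhds hy] with z hz
      exact hodd1 z hz
    have h6 := h4.congr_of_eventuallyEq hev
    exact (hF2 y hy).unique h6
  -- third derivative is odd at 0
  have hodd3 : ∀ y ∈ s, (∑' n : ℤ, g3 n y) = -(∑' n : ℤ, g3 n (-y)) := by
    intro y hy
    have hy' := hnegmem y hy
    have hneg : HasDerivAt (fun z : ℝ => -z) (-1) y := (hasDerivAt_id y).neg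
    have h4 : HasDerivAt (fun z : ℝ => ∑' n : ℤ, g2 n (-z)) (-(∑' n : ℤ, g3 n (-y))) y := by
      have h5 := (hF3 (-y) hy').comp y hneg
      refine h5.congr_deriv ?_
      ring
    have hev : (fun z => ∑' n : ℤ, g2 n z) =ᶠ[nhds y]
        (fun z : ℝ => ∑' n : ℤ, g2 n (-z)) := by
      filter_upwards [hs.mem_nhds hy] with z hz
      exact heven2 z hz
    have h6 := h4.congr_of_eventuallyEq hev
    exact (hF3 y hy).unique h6
  have hS1 : (∑' n : ℤ, g1 n 0) = 0 := by
    have := hodd1 0 h0mem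
    rw [neg_zero] at this
    linarith
  have hS3 : (∑' n : ℤ, g3 n 0) = 0 := by
    have := hodd3 0 h0mem
    rw [neg_zero] at this
    linarith
  -- combine
  set h : ℤ → ℝ := fun n => 4 * g3 n 0 - 1 / 4 * g1 n 0 with hdef
  have sumh : Summable h := (sumg3.mul_left 4).sub (sumg1.mul_left (1 / 4))
  have htsum : (∑' n : ℤ, h n) = 0 := by
    rw [hdef, Summable.tsum_sub (sumg3.mul_left 4) (sumg1.mul_left (1 / 4)),
      tsum_mul_left, tsum_mul_left, hS1, hS3]
    ring
  have h0 : h 0 = 0 := by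
    simp only [hdef, g3, g1, g0, uu]
    norm_num
  have heven : ∀ m : ℕ, h (-(m : ℤ)) = h (m : ℤ) := by
    intro m
    have hu : uu (-(m : ℤ)) 0 = uu (m : ℤ) 0 := by
      simp only [uu]; push_cast; ring
    simp only [hdef, g3, g1, g0, hu]
  have hnat : (∑' m : ℕ, h (m : ℤ)) = 0 := by
    have key := tsum_nat_add_neg sumh
    rw [htsum, h0, add_zero] at key
    have key2 : (∑' m : ℕ, (h (m : ℤ) + h (-(m : ℤ)))) = ∑' m : ℕ, 2 * h (m : ℤ) := by
      apply tsum_congr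
      intro m
      rw [heven m]
      ring
    rw [key2, tsum_mul_left] at key
    linarith
  -- relate to the goal
  set q : ℕ → ℝ := fun m => (m : ℝ) ^ 2 * Real.exp (-((m : ℝ) ^ 2 * π))
      * (-4 * (m : ℝ) ^ 4 * π ^ 2 + 15 * (m : ℝ) ^ 2 * π - 15 / 2) with hq_def
  have hq0 : q 0 = 0 := by simp [hq_def]
  have hhq : ∀ m : ℕ, h (m : ℤ) = π * q m := by
    intro m
    have he : g0 (m : ℤ) 0 = Real.exp (-((m : ℝ) ^ 2 * π)) := by
      rw [g0]
      congr 1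
      simp only [uu, Real.exp_zero]
      push_cast
      ring
    have hu : uu (m : ℤ) 0 = π * (m : ℝ) ^ 2 := by
      simp only [uu, Real.exp_zero]
      push_cast
      ring
    simp only [hdef, g3, g1, he, hu, hq_def]
    ring
  have hqsum : (∑' m : ℕ, q m) = 0 := by
    have : (∑' m : ℕ, h (m : ℤ)) = π * ∑' m : ℕ, q m := by
      rw [← tsum_mul_left]
      exact tsum_congr hhq
    rw [hnat] at this
    have hpi : π ≠ 0 := Real.pi_ne_zero
    field_simp at this
    exact (mul_eq_zero.mp this.symm).resolve_left hpi
  have hsub : (∑' n : ℕ+, q n) = ∑' m : ℕ, q m := by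
    refine tsum_subtype_eq_of_support_subset ?_
    intro x hx
    simp only [Function.mem_support] at hx
    by_contra hc
    have hx0 : x = 0 := by
      rcases Nat.eq_zero_or_pos x with h' | h'
      · exact h'
      · exact absurd h' hc
    exact hx (hx0 ▸ hq0)
  calc (∑' n : ℕ+, (n : ℝ) ^ 2 * Real.exp (-((n : ℝ) ^ 2 * π))
      * (-4 * (n : ℝ) ^ 4 * π ^ 2 + 15 * (n : ℝ) ^ 2 * π - 15 / 2))
      = ∑' n : ℕ+, q n := rfl
    _ = ∑' m : ℕ, q m := hsub
    _ = 0 := hqsum
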